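/- Let k ≥ 0 and let g : ℂ³ × ℝ^k → ℝ be continuously differentiable. For ε ∈ ℝ define φ_ε(z₀, z₁, z₂, x) = g(z₀, z₁, z₂, x) − log|z₀z₁ + εz₂|² on the open set where z₀z₁ + εz₂ ≠ 0. Fix x₀ ∈ ℝ^k. Then there is no sequence (ε_m, p_m) with ε_m → 0, ε_m ≠ 0, p_m = (z₀^m, z₁^m, z₂^m, x^m) → (0, 0, 0, x₀), z₀^m z₁^m + ε_m z₂^m ≠ 0 for every m, and the Fréchet derivative of φ_{ε_m} vanishing at p_m for every m. -/

import Mathlib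

open Filter Topology

section
variable {E : Type*} [NormedAddCommGroup E] [NormedSpace ℝ E]

lemma log_normSq_hasFDerivAt {s : E → ℂ} {L : E →L[ℝ] ℂ} {p : E}
    (hs : HasFDerivAt s L p) (h0 : s p ≠ 0) :
    HasFDerivAt (fun q => Real.log (Complex.normSq (s q)))
      ((Complex.normSq (s p))⁻¹ •
        (((s p).re • (Complex.reCLM.comp L) + (s p).re • (Complex.reCLM.comp L)) +
         ((s p).im • (Complex.imCLM.comp L) + (s p).im • (Complex.imCLM.comp L)))) p := by
  have hre : HasFDerivAt (fun q => (s q).re) (Complex.reCLM.comp L) p :=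
    (Complex.reCLM.hasFDerivAt).comp p hs
  have him : HasFDerivAt (fun q => (s q).im) (Complex.imCLM.comp L) p :=
    (Complex.imCLM.hasFDerivAt).comp p hs
  have hn : HasFDerivAt (fun q => Complex.normSq (s q))
      (((s p).re • (Complex.reCLM.comp L) + (s p).re • (Complex.reCLM.comp L)) +
       ((s p).im • (Complex.imCLM.comp L) + (s p).im • (Complex.imCLM.comp L))) p := by
    exact ((hre.mul hre).add (him.mul him)).congr_of_eventuallyEq
      (by filter_upwards with q; simp [Complex.normSq_apply])
  exact (Real.hasDerivAt_log (Complex.normSq_pos.2 h0).ne').comp_hasFDerivAt p hn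

end

lemma key_bound {w a : ℂ} {C : ℝ} (hw : w ≠ 0)
    (h1 : |(Complex.normSq w)⁻¹ * (w.re * a.re + w.re * a.re + (w.im * a.im + w.im * a.im))| ≤ C)
    (h2 : |(Complex.normSq w)⁻¹ * (w.re * (Complex.I * a).re + w.re * (Complex.I * a).re +
        (w.im * (Complex.I * a).im + w.im * (Complex.I * a).im))| ≤ C) :
    ‖a‖ ≤ C * ‖w‖ := by
  have hc : 0 < Complex.normSq w := Complex.normSq_pos.2 hw
  set u : ℂ := (starRingEnd ℂ) w * a with hu
  have hure : u.re = w.re * a.re + w.im * a.im := by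
    simp [hu, Complex.mul_re]
  have huim : u.im = w.re * a.im - w.im * a.re := by
    simp [hu, Complex.mul_im]; ring
  have hIre : (Complex.I * a).re = -a.im := by simp
  have hIim : (Complex.I * a).im = a.re := by simp
  rw [hIre, hIim] at h2
  -- h1 : |c⁻¹ * (2 u.re)| ≤ C, h2 : |c⁻¹ * (-2 u.im)| ≤ C
  have e1 : (Complex.normSq w)⁻¹ * (w.re * a.re + w.re * a.re + (w.im * a.im + w.im * a.im))
      = 2 * u.re / Complex.normSq w := by rw [hure]; field_simp; ring
  have e2 : (Complex.normSq w)⁻¹ * (w.re * -a.im + w.re * -a.im + (w.im * a.re + w.im * a.re))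
      = -(2 * u.im) / Complex.normSq w := by rw [huim]; field_simp; ring
  rw [e1] at h1
  rw [e2] at h2
  have hre : |u.re| ≤ C * Complex.normSq w / 2 := by
    rw [abs_div, abs_of_pos hc] at h1
    rw [div_le_iff₀ hc] at h1
    rw [abs_mul] at h1
    simp only [abs_two] at h1
    nlinarith [abs_nonneg u.re]
  have him : |u.im| ≤ C * Complex.normSq w / 2 := by
    rw [abs_div, abs_of_pos hc] at h2
    rw [div_le_iff₀ hc] at h2
    rw [abs_neg, abs_mul, abs_two] at h2
    nlinarith [abs_nonneg u.im]
  have habs : ‖u‖ ≤ C * Complex.normSq w := by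
    calc ‖u‖ ≤ |u.re| + |u.im| := Complex.norm_le_abs_re_add_abs_im u
    _ ≤ C * Complex.normSq w := by linarith
  have huabs : ‖u‖ = ‖w‖ * ‖a‖ := by
    rw [hu, norm_mul, Complex.norm_conj]
  have hwpos : 0 < ‖w‖ := norm_pos_iff.mpr hw
  have hsq : Complex.normSq w = ‖w‖ * ‖w‖ := by
    rw [Complex.normSq_eq_norm_sq]; ring
  rw [huabs, hsq] at habs
  exact le_of_mul_le_mul_left (by nlinarith) hwpos


lemma step (k : ℕ) (ε : ℝ) (z₀ z₁ z₂ : ℂ) (x : EuclideanSpace ℝ (Fin k)) (C : ℝ)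
    (g : ℂ × ℂ × ℂ × EuclideanSpace ℝ (Fin k) → ℝ)
    (hgd : DifferentiableAt ℝ g (z₀, z₁, z₂, x))
    (hw : z₀ * z₁ + (ε : ℂ) * z₂ ≠ 0)
    (hC : ‖fderiv ℝ g (z₀, z₁, z₂, x)‖ ≤ C)
    (hcrit : fderiv ℝ
        (fun p : ℂ × ℂ × ℂ × EuclideanSpace ℝ (Fin k) =>
          g p - Real.log (Complex.normSq (p.1 * p.2.1 + (ε : ℂ) * p.2.2.1)))
        (z₀, z₁, z₂, x) = 0) :
    ‖z₀‖ ≤ C * ‖(z₀ * z₁ + (ε : ℂ) * z₂)‖ ∧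
      |ε| ≤ C * ‖(z₀ * z₁ + (ε : ℂ) * z₂)‖ := by
  let E' := ℂ × ℂ × ℂ × EuclideanSpace ℝ (Fin k)
  set p : E' := ((z₀, z₁, z₂, x) : ℂ × ℂ × ℂ × EuclideanSpace ℝ (Fin k)) with hpdef
  set w : ℂ := z₀ * z₁ + (ε : ℂ) * z₂ with hwdef
  set L1 : E' →L[ℝ] ℂ := ContinuousLinearMap.fst ℝ ℂ (ℂ × ℂ × EuclideanSpace ℝ (Fin k)) with hL1
  set L2 : E' →L[ℝ] ℂ :=
    (ContinuousLinearMap.fst ℝ ℂ (ℂ × EuclideanSpace ℝ (Fin k))).comp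
      (ContinuousLinearMap.snd ℝ ℂ (ℂ × ℂ × EuclideanSpace ℝ (Fin k))) with hL2
  set L3 : E' →L[ℝ] ℂ :=
    (ContinuousLinearMap.fst ℝ ℂ (EuclideanSpace ℝ (Fin k))).comp
      ((ContinuousLinearMap.snd ℝ ℂ (ℂ × EuclideanSpace ℝ (Fin k))).comp
        (ContinuousLinearMap.snd ℝ ℂ (ℂ × ℂ × EuclideanSpace ℝ (Fin k)))) with hL3
  have h1 : HasFDerivAt (fun q : E' => q.1) L1 p := hasFDerivAt_fst
  have h2 : HasFDerivAt (fun q : E' => q.2.1) L2 p :=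
    HasFDerivAt.comp p hasFDerivAt_fst hasFDerivAt_snd
  have h3 : HasFDerivAt (fun q : E' => q.2.2.1) L3 p :=
    HasFDerivAt.comp p hasFDerivAt_fst (HasFDerivAt.comp p hasFDerivAt_snd hasFDerivAt_snd)
  set Ls : E' →L[ℝ] ℂ := (z₀ • L2 + z₁ • L1) + (ε : ℂ) • L3 with hLs
  have hs : HasFDerivAt (fun q : E' => q.1 * q.2.1 + (ε : ℂ) * q.2.2.1) Ls p :=
    (h1.mul h2).add (h3.const_mul ((ε : ℂ)))
  have hw' : (fun q : E' => q.1 * q.2.1 + (ε : ℂ) * q.2.2.1) p ≠ 0 := hw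
  have hlog := log_normSq_hasFDerivAt hs hw'
  set c : ℝ := Complex.normSq w with hc
  set N : E' →L[ℝ] ℝ :=
    ((w.re • (Complex.reCLM.comp Ls) + w.re • (Complex.reCLM.comp Ls)) +
     (w.im • (Complex.imCLM.comp Ls) + w.im • (Complex.imCLM.comp Ls))) with hN
  have hlog' : HasFDerivAt
      (fun q : E' => Real.log (Complex.normSq (q.1 * q.2.1 + (ε : ℂ) * q.2.2.1)))
      (c⁻¹ • N) p := hlog
  have hφ := hgd.hasFDerivAt.sub hlog'
  have hfd := hφ.fderiv
  rw [show (g - fun q : E' => Real.log (Complex.normSq (q.1 * q.2.1 + (ε : ℂ) * q.2.2.1))) =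
      fun p => g p - Real.log (Complex.normSq (p.1 * p.2.1 + (ε : ℂ) * p.2.2.1)) from rfl, hcrit] at hfd
  have hDg : fderiv ℝ g p = c⁻¹ • N := sub_eq_zero.1 hfd.symm
  have hb : ∀ v : E', |(c⁻¹ • N) v| ≤ C * ‖v‖ := by
    intro v
    rw [← hDg]
    calc |(fderiv ℝ g p) v| ≤ ‖fderiv ℝ g p‖ * ‖v‖ := (fderiv ℝ g p).le_opNorm v
    _ ≤ C * ‖v‖ := by
        have := norm_nonneg v
        exact mul_le_mul_of_nonneg_right hC this
  -- evaluate
  have hNv : ∀ v : E', (c⁻¹ • N) v =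
      c⁻¹ * ((w.re * (Ls v).re + w.re * (Ls v).re) + (w.im * (Ls v).im + w.im * (Ls v).im)) := by
    intro v
    simp [hN, ContinuousLinearMap.add_apply, ContinuousLinearMap.smul_apply,
      ContinuousLinearMap.coe_comp', Function.comp, Complex.reCLM_apply, Complex.imCLM_apply,
      smul_eq_mul, mul_add]
  have hLsv : ∀ v : E', Ls v = z₀ * v.2.1 + z₁ * v.1 + (ε : ℂ) * v.2.2.1 := by
    intro v
    rfl
  have hCnn : 0 ≤ C := le_trans (norm_nonneg _) hC
  have bound : ∀ a : ℂ, (∀ v : E', Ls v = a ∨ Ls v = Complex.I * a → True) → True := fun _ _ => trivial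
  -- four evaluations
  have mk : ∀ (v : E'), ‖v‖ = 1 →
      |c⁻¹ * (w.re * (Ls v).re + w.re * (Ls v).re + (w.im * (Ls v).im + w.im * (Ls v).im))| ≤ C := by
    intro v hv1
    have hv := hb v
    rw [hNv, hv1, mul_one] at hv
    exact hv
  have hn1 : ‖((0:ℂ), (1:ℂ), (0:ℂ), (0:EuclideanSpace ℝ (Fin k)))‖ = 1 := by
    simp [Prod.norm_def]
  have hnI : ‖((0:ℂ), Complex.I, (0:ℂ), (0:EuclideanSpace ℝ (Fin k)))‖ = 1 := by
    simp [Prod.norm_def]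
  have hn1' : ‖((0:ℂ), (0:ℂ), (1:ℂ), (0:EuclideanSpace ℝ (Fin k)))‖ = 1 := by
    simp [Prod.norm_def]
  have hnI' : ‖((0:ℂ), (0:ℂ), Complex.I, (0:EuclideanSpace ℝ (Fin k)))‖ = 1 := by
    simp [Prod.norm_def]
  have e1 : Ls ((0:ℂ), (1:ℂ), (0:ℂ), (0:EuclideanSpace ℝ (Fin k))) = z₀ := by
    rw [hLsv]; simp
  have e2 : Ls ((0:ℂ), Complex.I, (0:ℂ), (0:EuclideanSpace ℝ (Fin k))) = Complex.I * z₀ := by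
    rw [hLsv]; simp [mul_comm]
  have e3 : Ls ((0:ℂ), (0:ℂ), (1:ℂ), (0:EuclideanSpace ℝ (Fin k))) = (ε : ℂ) := by
    rw [hLsv]; simp
  have e4 : Ls ((0:ℂ), (0:ℂ), Complex.I, (0:EuclideanSpace ℝ (Fin k))) = Complex.I * (ε : ℂ) := by
    rw [hLsv]; simp [mul_comm]
  have k1 := mk _ hn1; rw [e1] at k1
  have k2 := mk _ hnI; rw [e2] at k2
  have k3 := mk _ hn1'; rw [e3] at k3
  have k4 := mk _ hnI'; rw [e4] at k4
  constructor
  · exact key_bound hw k1 k2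
  · have := key_bound hw k3 k4
    rwa [Complex.norm_real, Real.norm_eq_abs] at this

open Filter Topology


/-- Critical points of `φ_ε = g - log|z₀z₁ + εz₂|²` cannot wander off to
the base locus (the point `(0,0,0,x₀)`) as `ε → 0`. -/
theorem no_critical_points_near_base_locus
    (k : ℕ) (g : ℂ × ℂ × ℂ × EuclideanSpace ℝ (Fin k) → ℝ) (hg : ContDiff ℝ 1 g)
    (x₀ : EuclideanSpace ℝ (Fin k)) :
    ¬ ∃ (ε : ℕ → ℝ) (z₀ z₁ z₂ : ℕ → ℂ) (x : ℕ → EuclideanSpace ℝ (Fin k)),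
        Tendsto ε atTop (𝓝 0) ∧ (∀ m, ε m ≠ 0) ∧
        Tendsto (fun m => ((z₀ m, z₁ m, z₂ m, x m) : ℂ × ℂ × ℂ × EuclideanSpace ℝ (Fin k)))
          atTop (𝓝 ((0 : ℂ), (0 : ℂ), (0 : ℂ), x₀)) ∧
        (∀ m, z₀ m * z₁ m + (ε m : ℂ) * z₂ m ≠ 0) ∧
        (∀ m, fderiv ℝ
            (fun p : ℂ × ℂ × ℂ × EuclideanSpace ℝ (Fin k) =>
              g p - Real.log (Complex.normSq (p.1 * p.2.1 + (ε m : ℂ) * p.2.2.1)))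
            (z₀ m, z₁ m, z₂ m, x m) = 0) := by
  rintro ⟨ε, z₀, z₁, z₂, x, hε, hεne, hp, hwne, hcrit⟩
  set C : ℝ := ‖fderiv ℝ g ((0:ℂ), (0:ℂ), (0:ℂ), x₀)‖ + 1 with hCdef
  have hCpos : 0 < C := by positivity
  have hgdiff : Differentiable ℝ g := hg.differentiable one_ne_zero
  have hcontf : Continuous (fun q : ℂ × ℂ × ℂ × EuclideanSpace ℝ (Fin k) => fderiv ℝ g q) :=
    hg.continuous_fderiv one_ne_zero
  have hfnorm : Tendsto (fun m => ‖fderiv ℝ g (z₀ m, z₁ m, z₂ m, x m)‖) atTop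
      (𝓝 ‖fderiv ℝ g ((0:ℂ), (0:ℂ), (0:ℂ), x₀)‖) :=
    ((hcontf.tendsto _).comp hp).norm
  have hev1 : ∀ᶠ m in atTop, ‖fderiv ℝ g (z₀ m, z₁ m, z₂ m, x m)‖ ≤ C :=
    hfnorm.eventually (eventually_le_nhds (by rw [hCdef]; linarith))
  have hz₁ : Tendsto z₁ atTop (𝓝 0) := by
    have := ((continuous_fst.comp continuous_snd).tendsto
      (((0:ℂ), (0:ℂ), (0:ℂ), x₀) : ℂ × ℂ × ℂ × EuclideanSpace ℝ (Fin k))).comp hp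
    exact this
  have hz₂ : Tendsto z₂ atTop (𝓝 0) := by
    have := ((continuous_fst.comp (continuous_snd.comp continuous_snd)).tendsto
      (((0:ℂ), (0:ℂ), (0:ℂ), x₀) : ℂ × ℂ × ℂ × EuclideanSpace ℝ (Fin k))).comp hp
    exact this
  have hsum : Tendsto (fun m => ‖(z₁ m)‖ + ‖(z₂ m)‖) atTop (𝓝 0) := by
    have := (hz₁.norm.add hz₂.norm)
    simpa using this
  have hev2 : ∀ᶠ m in atTop, ‖(z₁ m)‖ + ‖(z₂ m)‖ < C⁻¹ :=
    hsum.eventually (eventually_lt_nhds (by positivity))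
  obtain ⟨m, hm1, hm2⟩ := (hev1.and hev2).exists
  obtain ⟨b1, b2⟩ := step k (ε m) (z₀ m) (z₁ m) (z₂ m) (x m) C g
    (hgdiff _) (hwne m) hm1 (hcrit m)
  set W : ℝ := ‖(z₀ m * z₁ m + (ε m : ℂ) * z₂ m)‖ with hW
  have hWpos : 0 < W := norm_pos_iff.mpr (hwne m)
  have tri : W ≤ ‖(z₀ m)‖ * ‖(z₁ m)‖ + |ε m| * ‖(z₂ m)‖ := by
    calc W ≤ ‖(z₀ m * z₁ m)‖ + ‖((ε m : ℂ) * z₂ m)‖ :=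
          norm_add_le _ _
      _ = ‖(z₀ m)‖ * ‖(z₁ m)‖ + |ε m| * ‖(z₂ m)‖ := by
          rw [norm_mul, norm_mul, Complex.norm_real, Real.norm_eq_abs]
  have t1 : ‖(z₀ m)‖ * ‖(z₁ m)‖ ≤ C * W * ‖(z₁ m)‖ :=
    mul_le_mul_of_nonneg_right b1 (norm_nonneg _)
  have t2 : |ε m| * ‖(z₂ m)‖ ≤ C * W * ‖(z₂ m)‖ :=
    mul_le_mul_of_nonneg_right b2 (norm_nonneg _)
  have h3 : W ≤ C * W * (‖(z₁ m)‖ + ‖(z₂ m)‖) := by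
    have : C * W * ‖(z₁ m)‖ + C * W * ‖(z₂ m)‖
        = C * W * (‖(z₁ m)‖ + ‖(z₂ m)‖) := by ring
    linarith
  have h4 : C * W * (‖(z₁ m)‖ + ‖(z₂ m)‖) < C * W * C⁻¹ :=
    mul_lt_mul_of_pos_left hm2 (by positivity)
  have h5 : C * W * C⁻¹ = W := by field_simp
  exact absurd (h3.trans_lt (h4.trans_eq h5)) (lt_irrefl W)
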